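/- Let P be a finite poset, P* ⊆ P with min(P) ∪ max(P) ⊆ P*, and λ: P* → ℤ an integral order-preserving marking such that (P,λ) is regular. Suppose P is ranked but λ does not arise from any rank function, i.e., there exist a < b in P* such that λ(b) − λ(a) is strictly greater than the length of every saturated chain from a to b. If the marked order polytope O(P,λ) has a unique interior lattice point u, then the translated polytope O(P,λ) − u is not reflexive. -/

import Mathlib

open scoped Classical

/-- Extend a point `x ∈ ℝ^{P̃}` by the marking `λ` on `P*`. -/
noncomputable def extFun {P : Type*} (Pstar : Set P) (lam : P → ℝ)
    (x : {p : P // p ∉ Pstar} → ℝ) : P → ℝ :=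
  fun p => if h : p ∈ Pstar then lam p else x ⟨p, h⟩

/-- The projected marked order polytope `O(P,λ) ⊆ ℝ^{P̃}`. -/
def MOproj {P : Type*} [PartialOrder P] (Pstar : Set P) (lam : P → ℝ) :
    Set ({p : P // p ∉ Pstar} → ℝ) :=
  {x | ∀ p q : P, p ≤ q → extFun Pstar lam x p ≤ extFun Pstar lam x q}

/-- A point of `ℝ^ι` is a lattice point if all its coordinates are integers. -/
def IsLat {ι : Type*} (x : ι → ℝ) : Prop := ∀ p, ∃ n : ℤ, x p = n

/-- The polar dual of `Q ⊆ ℝ^ι`. -/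
def polarDual {ι : Type*} [Fintype ι] (Q : Set (ι → ℝ)) : Set (ι → ℝ) :=
  {a | ∀ x ∈ Q, ∑ p, a p * x p ≤ 1}

section Aux

/-- Extension lemma: strictly monotone extension of a strictly compatible partial function. -/
lemma exists_strict_ext {Q : Type*} [Fintype Q] (R : Q → Q → Prop)
    (htrans : ∀ a b c, R a b → R b c → R a c)
    (hanti : ∀ a b, R a b → R b a → a = b) :
    ∀ (n : ℕ) (S : Finset Q) (f : Q → ℝ),
      S.card + n = Fintype.card Q →
      (∀ a ∈ S, ∀ b ∈ S, R a b → a ≠ b → f a < f b) →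
      (∀ x, x ∉ S → ∃ a ∈ S, R a x) →
      (∀ x, x ∉ S → ∃ b ∈ S, R x b) →
      ∃ g : Q → ℝ, (∀ a ∈ S, g a = f a) ∧ (∀ x y, R x y → x ≠ y → g x < g y) := by
  intro n
  induction n with
  | zero =>
    intro S f hcard hf _ _
    have hSu : S = Finset.univ := Finset.eq_univ_of_card S (by omega)
    have hS : ∀ x : Q, x ∈ S := fun x => hSu ▸ Finset.mem_univ x
    exact ⟨f, fun a _ => rfl, fun x y hxy hne => hf x (hS x) y (hS y) hxy hne⟩
  | succ n ih =>
    intro S f hcard hf hlow hhigh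
    have hxS : ∃ x : Q, x ∉ S := by
      by_contra hall
      push_neg at hall
      have : S = Finset.univ := Finset.eq_univ_iff_forall.2 hall
      rw [this, Finset.card_univ] at hcard
      omega
    obtain ⟨x, hxS⟩ := hxS
    set A := S.filter (fun a => R a x) with hA
    set B := S.filter (fun b => R x b) with hB
    have hAne : A.Nonempty := by
      obtain ⟨a, ha, har⟩ := hlow x hxS
      exact ⟨a, Finset.mem_filter.2 ⟨ha, har⟩⟩
    have hBne : B.Nonempty := by
      obtain ⟨b, hb, hbr⟩ := hhigh x hxS
      exact ⟨b, Finset.mem_filter.2 ⟨hb, hbr⟩⟩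
    set vA := A.sup' hAne f with hvA
    set vB := B.inf' hBne f with hvB
    have hAB : vA < vB := by
      rw [hvA, Finset.sup'_lt_iff]
      intro a haA
      rw [hvB, Finset.lt_inf'_iff]
      intro b hbB
      obtain ⟨haS, hax⟩ := Finset.mem_filter.1 haA
      obtain ⟨hbS, hxb⟩ := Finset.mem_filter.1 hbB
      have hab : R a b := htrans _ _ _ hax hxb
      have hne : a ≠ b := by
        rintro rfl
        exact hxS (by rwa [hanti a x hax hxb] at haS)
      exact hf a haS b hbS hab hne
    set v := (vA + vB) / 2 with hv
    have hvlt : vA < v ∧ v < vB := by constructor <;> (rw [hv]; linarith)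
    set f' := Function.update f x v with hf'
    have hub : ∀ a ∈ S, R a x → f a < v := by
      intro a ha har
      have hmem : a ∈ A := Finset.mem_filter.2 ⟨ha, har⟩
      exact lt_of_le_of_lt (Finset.le_sup' f hmem) hvlt.1
    have hlb : ∀ b ∈ S, R x b → v < f b := by
      intro b hb hbr
      have hmem : b ∈ B := Finset.mem_filter.2 ⟨hb, hbr⟩
      exact lt_of_lt_of_le hvlt.2 (Finset.inf'_le f hmem)
    have hcard' : (insert x S).card + n = Fintype.card Q := by
      rw [Finset.card_insert_of_notMem hxS]; omega
    obtain ⟨g, hg1, hg2⟩ := ih (insert x S) f' hcard'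
      (by
        intro a ha b hb hab hne
        simp only [hf']
        rcases Finset.mem_insert.1 ha with ha' | haS <;>
          rcases Finset.mem_insert.1 hb with hb' | hbS
        · exact absurd (ha'.trans hb'.symm) hne
        · subst ha'
          have hbx : b ≠ a := fun h => hxS (h ▸ hbS)
          rw [Function.update_self, Function.update_of_ne hbx]
          exact hlb b hbS hab
        · subst hb'
          have hax : a ≠ b := fun h => hxS (h ▸ haS)
          rw [Function.update_self, Function.update_of_ne hax]
          exact hub a haS hab
        · have hax : a ≠ x := fun h => hxS (h ▸ haS)
          have hbx : b ≠ x := fun h => hxS (h ▸ hbS)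
          rw [Function.update_of_ne hax, Function.update_of_ne hbx]
          exact hf a haS b hbS hab hne)
      (by
        intro y hy
        obtain ⟨a, ha, har⟩ := hlow y (fun h => hy (Finset.mem_insert_of_mem h))
        exact ⟨a, Finset.mem_insert_of_mem ha, har⟩)
      (by
        intro y hy
        obtain ⟨b, hb, hbr⟩ := hhigh y (fun h => hy (Finset.mem_insert_of_mem h))
        exact ⟨b, Finset.mem_insert_of_mem hb, hbr⟩)
    refine ⟨g, fun a ha => ?_, hg2⟩
    rw [hg1 a (Finset.mem_insert_of_mem ha), hf']
    have hax : a ≠ x := fun h => hxS (h ▸ ha)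
    exact Function.update_of_ne hax _ _

lemma transgen_covby {P : Type*} [PartialOrder P] [Fintype P] {r s : P} (h : r < s) :
    Relation.TransGen (· ⋖ ·) r s := by
  have wf : WellFounded ((· > ·) : P → P → Prop) := (Finite.to_wellFoundedGT).wf
  revert h
  refine WellFounded.induction wf (C := fun r => r < s → Relation.TransGen (· ⋖ ·) r s) r ?_
  intro r ih hrs
  obtain ⟨m, hm, hmin⟩ := (wellFounded_lt : WellFounded ((· < ·) : P → P → Prop)).has_min
    {t : P | r < t ∧ t ≤ s} ⟨s, hrs, le_refl s⟩
  have cov : r ⋖ m := ⟨hm.1, fun c hc1 hc2 => hmin c ⟨hc1, (le_of_lt hc2).trans hm.2⟩ hc2⟩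
  rcases eq_or_lt_of_le hm.2 with rfl | hms
  · exact Relation.TransGen.single cov
  · exact Relation.TransGen.head cov (ih m hm.1 hms)

lemma mono_of_cov {P : Type*} [PartialOrder P] [Fintype P] (ψ : P → ℝ)
    (h : ∀ r s : P, r ⋖ s → ψ r ≤ ψ s) : ∀ r s : P, r ≤ s → ψ r ≤ ψ s := by
  intro r s hrs
  rcases eq_or_lt_of_le hrs with rfl | h'
  · exact le_refl _
  · have ht := transgen_covby h'
    clear hrs h'
    induction ht with
    | single hbc => exact h _ _ hbc
    | tail _ hbc ihh => exact le_trans ihh (h _ _ hbc)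

lemma strictmono_of_cov {P : Type*} [PartialOrder P] [Fintype P] (ψ : P → ℝ)
    (h : ∀ r s : P, r ⋖ s → ψ r < ψ s) : ∀ r s : P, r < s → ψ r < ψ s := by
  intro r s hrs
  have ht := transgen_covby hrs
  clear hrs
  induction ht with
  | single hbc => exact h _ _ hbc
  | tail _ hbc ihh => exact lt_trans ihh (h _ _ hbc)

lemma chain_of_transgen {P : Type*} [PartialOrder P] {a b : P}
    (h : Relation.TransGen (· ⋖ ·) a b) :
    ∃ l : List P, List.Chain' (· ⋖ ·) (a :: (l ++ [b])) := by
  induction h using Relation.TransGen.head_induction_on with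
  | single hc => exact ⟨[], List.isChain_cons_cons.2 ⟨hc, List.isChain_singleton b⟩⟩
  | head hac _ ihh =>
    obtain ⟨l, hl⟩ := ihh
    exact ⟨_ :: l, List.isChain_cons_cons.2 ⟨hac, hl⟩⟩

end Aux

/-- let `(P,λ)` be integral and regular with `min(P) ∪ max(P) ⊆ P*`, `P`
ranked, but `λ` not arising from a rank function: some `a < b` in `P*` have
`λ(b) - λ(a)` strictly larger than the length of every saturated chain from `a` to `b`.
If `O(P,λ)` has a unique interior lattice point `u`, then `O(P,λ) - u` is not reflexive:
its polar dual is not a lattice polytope. -/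
theorem mo_not_reflexive {P : Type*} [PartialOrder P] [Fintype P]
    (Pstar : Set P) [Fintype {p : P // p ∉ Pstar}] (lam : P → ℝ)
    (hmin : ∀ p : P, IsMin p → p ∈ Pstar)
    (hmax : ∀ p : P, IsMax p → p ∈ Pstar)
    (hlam : MonotoneOn lam Pstar)
    (hint : ∀ a ∈ Pstar, ∃ n : ℤ, lam a = n)
    (hreg : ∀ p q : P, p ⋖ q → ∀ a ∈ Pstar, ∀ b ∈ Pstar, a ≤ q → p ≤ b →
      a = b ∨ lam a < lam b)
    (hranked : ∃ r : P → ℤ, ∀ p q : P, p ⋖ q → r p = r q - 1)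
    (hgap : ∃ a ∈ Pstar, ∃ b ∈ Pstar, a < b ∧
      ∀ l : List P, List.Chain' (· ⋖ ·) (a :: (l ++ [b])) →
        ((l.length : ℝ) + 1) < lam b - lam a)
    (u : {p : P // p ∉ Pstar} → ℝ)
    (hu : {x | x ∈ interior (MOproj Pstar lam) ∧ IsLat x} = {u}) :
    ¬ ∃ A : Finset ({p : P // p ∉ Pstar} → ℝ), (∀ α ∈ A, IsLat α) ∧
        polarDual ((fun x => x - u) '' MOproj Pstar lam) =
          convexHull ℝ (A : Set ({p : P // p ∉ Pstar} → ℝ)) := by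
  rintro ⟨A, hAlat, hAdual⟩
  have humem : u ∈ {x | x ∈ interior (MOproj Pstar lam) ∧ IsLat x} := by
    rw [hu]; rfl
  obtain ⟨huint, hulat⟩ := humem
  have huO : u ∈ MOproj Pstar lam := interior_subset huint
  set v : P → ℝ := extFun Pstar lam u with hv
  have hvmark : ∀ p : P, p ∈ Pstar → v p = lam p := by
    intro p h; simp [hv, extFun, h]
  have hvfree : ∀ (p : P) (h : p ∉ Pstar), v p = u ⟨p, h⟩ := by
    intro p h; simp [hv, extFun, h]
  have hvint : ∀ p : P, ∃ n : ℤ, v p = n := by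
    intro p
    by_cases h : p ∈ Pstar
    · rw [hvmark p h]; exact hint p h
    · rw [hvfree p h]; exact hulat ⟨p, h⟩
  obtain ⟨ε, hε, hball⟩ := Metric.isOpen_iff.1 isOpen_interior u huint
  have hballO : Metric.ball u ε ⊆ MOproj Pstar lam := hball.trans interior_subset
  have hPP : ∀ p q : P, p ⋖ q → ¬(p ∈ Pstar ∧ q ∈ Pstar) := by
    rintro p q hc ⟨hp, hq⟩
    rcases hreg p q hc q hq p hp le_rfl le_rfl with h | h
    · exact hc.lt.ne' h
    · exact absurd (hlam hp hq hc.lt.le) (not_le.2 h)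
  -- helper: extFun of an update, away from the updated coordinate
  have extupd : ∀ (x : {p : P // p ∉ Pstar} → ℝ) (t : {p : P // p ∉ Pstar}) (c : ℝ) (w : P),
      w ≠ t.1 → extFun Pstar lam (Function.update x t c) w = extFun Pstar lam x w := by
    intro x t c w hw
    unfold extFun
    by_cases h : w ∈ Pstar
    · rw [dif_pos h, dif_pos h]
    · rw [dif_neg h, dif_neg h,
        Function.update_of_ne (fun hh => hw (congrArg Subtype.val hh)) _ _]
  have hstrict : ∀ p q : P, p ⋖ q → v p < v q := by
    intro p q hc
    by_cases hq : q ∈ Pstar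
    · have hp : p ∉ Pstar := fun hp => hPP p q hc ⟨hp, hq⟩
      set x := Function.update u ⟨p, hp⟩ (u ⟨p, hp⟩ + ε/2) with hx
      have hxO : x ∈ MOproj Pstar lam := by
        apply hballO
        rw [Metric.mem_ball, dist_pi_lt_iff hε]
        intro i
        by_cases hi : i = ⟨p, hp⟩
        · subst hi
          rw [hx, Function.update_self, Real.dist_eq]
          have h2 : u ⟨p, hp⟩ + ε/2 - u ⟨p, hp⟩ = ε/2 := by ring
          rw [h2, abs_of_pos (by linarith)]
          linarith
        · rw [hx, Function.update_of_ne hi, dist_self]; exact hε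
      have hle := hxO p q hc.lt.le
      have h1 : extFun Pstar lam x p = u ⟨p, hp⟩ + ε/2 := by
        unfold extFun
        rw [dif_neg hp, hx, Function.update_self]
      have h2 : extFun Pstar lam x q = lam q := by
        unfold extFun; rw [dif_pos hq]
      rw [h1, h2] at hle
      rw [hvfree p hp, hvmark q hq]
      linarith
    · set x := Function.update u ⟨q, hq⟩ (u ⟨q, hq⟩ - ε/2) with hx
      have hxO : x ∈ MOproj Pstar lam := by
        apply hballO
        rw [Metric.mem_ball, dist_pi_lt_iff hε]
        intro i
        by_cases hi : i = ⟨q, hq⟩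
        · subst hi
          rw [hx, Function.update_self, Real.dist_eq]
          have h2 : u ⟨q, hq⟩ - ε/2 - u ⟨q, hq⟩ = -(ε/2) := by ring
          rw [h2, abs_neg, abs_of_pos (by linarith)]
          linarith
        · rw [hx, Function.update_of_ne hi, dist_self]; exact hε
      have hle := hxO p q hc.lt.le
      have h1 : extFun Pstar lam x p = v p := by
        rw [hx, extupd u ⟨q, hq⟩ _ p hc.lt.ne, hv]
      have h2 : extFun Pstar lam x q = u ⟨q, hq⟩ - ε/2 := by
        unfold extFun
        rw [dif_neg hq, hx, Function.update_self]
      rw [h1, h2] at hle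
      rw [hvfree q hq]
      linarith
  have hstep : ∀ p q : P, p ⋖ q → v p + 1 ≤ v q := by
    intro p q hc
    obtain ⟨m, hm⟩ := hvint p
    obtain ⟨n, hn⟩ := hvint q
    have := hstrict p q hc
    rw [hm, hn] at *
    have h1 : m < n := by exact_mod_cast this
    have h2 : m + 1 ≤ n := h1
    exact_mod_cast h2
  -- extract a cover with gap at least 2
  obtain ⟨a, ha, b, hb, hab, hchain⟩ := hgap
  obtain ⟨l₀, hl₀⟩ := chain_of_transgen (transgen_covby hab)
  have hgap2 : ∃ p q : P, p ⋖ q ∧ v p + 2 ≤ v q := by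
    have key : ∀ (l : List P) (c : P), List.Chain' (· ⋖ ·) (c :: (l ++ [b])) →
        (∃ p q : P, p ⋖ q ∧ v p + 2 ≤ v q) ∨ v b ≤ v c + ((l.length : ℝ) + 1) := by
      intro l
      induction l with
      | nil =>
        intro c hch
        have hcb : c ⋖ b := (List.isChain_cons_cons.1 hch).1
        by_cases h2 : v c + 2 ≤ v b
        · exact Or.inl ⟨c, b, hcb, h2⟩
        · right
          push_neg at h2
          simp only [List.length_nil, Nat.cast_zero]
          obtain ⟨m, hm⟩ := hvint c
          obtain ⟨n, hn⟩ := hvint b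
          rw [hm, hn] at h2 ⊢
          have h3 : n < m + 2 := by exact_mod_cast h2
          have h4 : n ≤ m + 1 := by omega
          have : (n : ℝ) ≤ (m : ℝ) + 1 := by exact_mod_cast h4
          linarith
      | cons e l ihl =>
        intro c hch
        rw [List.cons_append, List.Chain', List.isChain_cons_cons] at hch
        obtain ⟨hce, hch'⟩ := hch
        rcases ihl e hch' with h | h
        · exact Or.inl h
        · by_cases h2 : v c + 2 ≤ v e
          · exact Or.inl ⟨c, e, hce, h2⟩
          · right
            push_neg at h2
            obtain ⟨m, hm⟩ := hvint c
            obtain ⟨n, hn⟩ := hvint e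
            rw [hm, hn] at h2
            have h3 : n < m + 2 := by exact_mod_cast h2
            have h4 : n ≤ m + 1 := by omega
            have h5 : (n : ℝ) ≤ (m : ℝ) + 1 := by exact_mod_cast h4
            simp only [List.length_cons, Nat.cast_add, Nat.cast_one]
            rw [hm]
            rw [hn] at h
            push_cast
            linarith
    rcases key l₀ a hl₀ with h | h
    · exact h
    · exfalso
      have hgl := hchain l₀ hl₀
      rw [hvmark a ha, hvmark b hb] at h
      linarith
  obtain ⟨p₀, q₀, hcov, hd2⟩ := hgap2
  set d : ℝ := v q₀ - v p₀ with hd_def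
  have hd : (2:ℝ) ≤ d := by rw [hd_def]; linarith
  have hd0 : (0:ℝ) < d := by linarith
  have hpq : p₀ ≠ q₀ := hcov.lt.ne
  have hfree : p₀ ∉ Pstar ∨ q₀ ∉ Pstar := by
    by_contra h
    push_neg at h
    exact hPP p₀ q₀ hcov ⟨h.1, h.2⟩
  have hitv : ∀ r : P, p₀ ≤ r → r ≤ q₀ → r = p₀ ∨ r = q₀ := by
    intro r h1 h2
    by_cases h : r = p₀
    · exact Or.inl h
    · right
      rcases eq_or_lt_of_le h2 with h' | h'
      · exact h'
      · exact absurd h' (hcov.2 (lt_of_le_of_ne h1 (Ne.symm h)))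
  set α : {p : P // p ∉ Pstar} → ℝ :=
    fun r => ((if r.1 = p₀ then (1:ℝ) else 0) - (if r.1 = q₀ then (1:ℝ) else 0)) / d with hα
  have coordSum : ∀ (w : P) (z : {p : P // p ∉ Pstar} → ℝ),
      (∑ r, (if r.1 = w then z r else 0))
        = if h : w ∈ Pstar then 0 else z ⟨w, h⟩ := by
    intro w z
    by_cases h : w ∈ Pstar
    · rw [dif_pos h]
      apply Finset.sum_eq_zero
      intro r _
      rw [if_neg]
      intro hr; exact r.2 (hr ▸ h)
    · rw [dif_neg h, Finset.sum_eq_single (⟨w, h⟩ : {p : P // p ∉ Pstar})]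
      · rw [if_pos rfl]
      · intro r _ hr
        rw [if_neg (fun hh => hr (Subtype.ext hh))]
      · intro hmem; exact absurd (Finset.mem_univ _) hmem
  have hE : ∀ (x : {p : P // p ∉ Pstar} → ℝ) (w : P),
      (if h : w ∈ Pstar then (0:ℝ) else (x ⟨w, h⟩ - u ⟨w, h⟩))
        = extFun Pstar lam x w - v w := by
    intro x w
    by_cases h : w ∈ Pstar
    · rw [dif_pos h, hvmark w h]
      unfold extFun
      rw [dif_pos h]; ring
    · rw [dif_neg h, hvfree w h]
      unfold extFun
      rw [dif_neg h]
  have pairSum : ∀ x : {p : P // p ∉ Pstar} → ℝ,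
      (∑ r, α r * (x r - u r))
        = ((extFun Pstar lam x p₀ - extFun Pstar lam x q₀) + d) / d := by
    intro x
    have h1 : ∀ r : {p : P // p ∉ Pstar}, α r * (x r - u r)
        = (if r.1 = p₀ then (x r - u r) else 0)/d - (if r.1 = q₀ then (x r - u r) else 0)/d := by
      intro r
      simp only [hα]
      split_ifs <;> ring
    rw [Finset.sum_congr rfl (fun r _ => h1 r), Finset.sum_sub_distrib,
      ← Finset.sum_div, ← Finset.sum_div, coordSum p₀ (fun r => x r - u r),
      coordSum q₀ (fun r => x r - u r)]
    have e1 := hE x p₀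
    have e2 := hE x q₀
    rw [e1, e2, div_sub_div_same]
    congr 1
    rw [hd_def]; ring
  have hαdual : α ∈ polarDual ((fun x => x - u) '' MOproj Pstar lam) := by
    rintro y ⟨x, hx, rfl⟩
    have hs : (∑ p, α p * (x - u) p) = ∑ p, α p * (x p - u p) := rfl
    rw [hs, pairSum x, div_le_one hd0]
    have hle : extFun Pstar lam x p₀ ≤ extFun Pstar lam x q₀ := hx p₀ q₀ hcov.lt.le
    linarith
  -- strict monotonicity of v and of lam on Pstar
  have hvlt : ∀ r s : P, r < s → v r < v s := strictmono_of_cov v hstrict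
  have hlamlt : ∀ r s : P, r ∈ Pstar → s ∈ Pstar → r < s → lam r < lam s := by
    intro r s hr hs hrs
    have := hvlt r s hrs
    rwa [hvmark r hr, hvmark s hs] at this
  -- minimal and maximal marked elements below/above everything
  have hbelow : ∀ x : P, ∃ m : P, m ≤ x ∧ m ∈ Pstar := by
    intro x
    obtain ⟨m, hm, hmin'⟩ := (wellFounded_lt : WellFounded ((· < ·) : P → P → Prop)).has_min
      {t : P | t ≤ x} ⟨x, le_refl x⟩
    refine ⟨m, hm, hmin m ?_⟩
    intro c hc
    have hcx : c ∈ {t : P | t ≤ x} := hc.trans hm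
    have := hmin' c hcx
    have hcm : c = m := by
      by_contra hne
      exact this (lt_of_le_of_ne hc hne)
    exact hcm ▸ le_refl _
  have habove : ∀ x : P, ∃ m : P, x ≤ m ∧ m ∈ Pstar := by
    intro x
    obtain ⟨m, hm, hmin'⟩ := ((Finite.to_wellFoundedGT (α := P)).wf).has_min
      {t : P | x ≤ t} ⟨x, le_refl x⟩
    refine ⟨m, hm, hmax m ?_⟩
    intro c hc
    have hcx : c ∈ {t : P | x ≤ t} := hm.trans hc
    have := hmin' c hcx
    have hcm : c = m := by
      by_contra hne
      exact this (lt_of_le_of_ne hc (fun hh => hne hh.symm))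
    exact hcm ▸ le_refl _
  -- the auxiliary type with p₀ and q₀ identified
  set R : {r : P // r ≠ q₀} → {r : P // r ≠ q₀} → Prop :=
    fun x y => x.1 ≤ y.1 ∨ (x.1 ≤ q₀ ∧ p₀ ≤ y.1) with hR
  have hpltq : p₀ < q₀ := hcov.lt
  have htrans : ∀ x y z, R x y → R y z → R x z := by
    rintro x y z (h1 | ⟨h1, h1'⟩) (h2 | ⟨h2, h2'⟩)
    · exact Or.inl (h1.trans h2)
    · exact Or.inr ⟨h1.trans h2, h2'⟩
    · exact Or.inr ⟨h1, h1'.trans h2⟩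
    · exact Or.inr ⟨h1, h2'⟩
  have hanti : ∀ x y, R x y → R y x → x = y := by
    rintro x y (h1 | ⟨h1, h1'⟩) (h2 | ⟨h2, h2'⟩)
    · exact Subtype.ext (le_antisymm h1 h2)
    · -- x ≤ y, y ≤ q₀, p₀ ≤ x
      rcases hitv x.1 h2' (h1.trans h2) with hx | hx
      · rcases hitv y.1 (h2'.trans h1) h2 with hy | hy
        · exact Subtype.ext (hx.trans hy.symm)
        · exact absurd hy y.2
      · exact absurd hx x.2
    · rcases hitv y.1 h1' (h2.trans h1) with hy | hy
      · rcases hitv x.1 (h1'.trans h2) h1 with hx | hx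
        · exact Subtype.ext (hx.trans hy.symm)
        · exact absurd hx x.2
      · exact absurd hy y.2
    · rcases hitv x.1 h2' h1 with hx | hx
      · rcases hitv y.1 h1' h2 with hy | hy
        · exact Subtype.ext (hx.trans hy.symm)
        · exact absurd hy y.2
      · exact absurd hx x.2
  set S : Finset {r : P // r ≠ q₀} :=
    Finset.univ.filter (fun x => x.1 ∈ Pstar ∨ (x.1 = p₀ ∧ q₀ ∈ Pstar)) with hS
  set f : {r : P // r ≠ q₀} → ℝ :=
    fun x => if x.1 = p₀ ∧ q₀ ∈ Pstar then lam q₀ else lam x.1 with hf_def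
  have hmemS : ∀ x : {r : P // r ≠ q₀},
      x ∈ S ↔ (x.1 ∈ Pstar ∨ (x.1 = p₀ ∧ q₀ ∈ Pstar)) := by
    intro x
    rw [hS, Finset.mem_filter]
    simp
  -- value of f on marked elements
  have hf_marked : ∀ (x : {r : P // r ≠ q₀}), x.1 ∈ Pstar → f x = lam x.1 := by
    intro x hx
    rw [hf_def]
    dsimp only
    rw [if_neg]
    rintro ⟨h1, h2⟩
    exact hPP p₀ q₀ hcov ⟨h1 ▸ hx, h2⟩
  have hf_special : ∀ (x : {r : P // r ≠ q₀}), x.1 = p₀ → q₀ ∈ Pstar → f x = lam q₀ := by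
    intro x h1 h2
    rw [hf_def]
    dsimp only
    rw [if_pos ⟨h1, h2⟩]
  have hfS : ∀ x ∈ S, ∀ y ∈ S, R x y → x ≠ y → f x < f y := by
    intro x hx y hy hRxy hne
    rcases (hmemS x).1 hx with hxm | ⟨hxp, hqm⟩
    · rcases (hmemS y).1 hy with hym | ⟨hyp, hqm⟩
      · -- both plainly marked
        rw [hf_marked x hxm, hf_marked y hym]
        rcases hRxy with h | ⟨h1, h2⟩
        · refine hlamlt _ _ hxm hym (lt_of_le_of_ne h ?_)
          exact fun hh => hne (Subtype.ext hh)
        · rcases hreg p₀ q₀ hcov x.1 hxm y.1 hym h1 h2 with h | h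
          · exact absurd (Subtype.ext h) hne
          · exact h
      · -- y is the special representative of q₀
        rw [hf_marked x hxm, hf_special y hyp hqm]
        have h1 : x.1 ≤ q₀ := by
          rcases hRxy with h | ⟨h, _⟩
          · exact (h.trans_eq hyp).trans hpltq.le
          · exact h
        rcases hreg p₀ q₀ hcov x.1 hxm q₀ hqm h1 hpltq.le with h | h
        · exact absurd h x.2
        · exact h
    · rcases (hmemS y).1 hy with hym | ⟨hyp, hqm'⟩
      · -- x special, y marked
        rw [hf_special x hxp hqm, hf_marked y hym]
        have h2 : p₀ ≤ y.1 := by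
          rcases hRxy with h | ⟨_, h⟩
          · exact hxp ▸ h
          · exact h
        rcases hreg p₀ q₀ hcov q₀ hqm y.1 hym le_rfl h2 with h | h
        · exact absurd h.symm y.2
        · exact h
      · exact absurd (Subtype.ext (hxp.trans hyp.symm)) hne
  have hlowS : ∀ x, x ∉ S → ∃ y ∈ S, R y x := by
    intro x _
    obtain ⟨m, hm1, hm2⟩ := hbelow x.1
    by_cases hmq : m = q₀
    · refine ⟨⟨p₀, hpq⟩, ?_, ?_⟩
      · rw [hmemS]
        exact Or.inr ⟨rfl, hmq ▸ hm2⟩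
      · exact Or.inl ((hpltq.le.trans (hmq ▸ hm1)))
    · exact ⟨⟨m, hmq⟩, (hmemS _).2 (Or.inl hm2), Or.inl hm1⟩
  have hhighS : ∀ x, x ∉ S → ∃ y ∈ S, R x y := by
    intro x _
    obtain ⟨m, hm1, hm2⟩ := habove x.1
    by_cases hmq : m = q₀
    · refine ⟨⟨p₀, hpq⟩, ?_, ?_⟩
      · rw [hmemS]
        exact Or.inr ⟨rfl, hmq ▸ hm2⟩
      · exact Or.inr ⟨hmq ▸ hm1, le_rfl⟩
    · exact ⟨⟨m, hmq⟩, (hmemS _).2 (Or.inl hm2), Or.inl hm1⟩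
  obtain ⟨g, hg1, hg2⟩ := exists_strict_ext R htrans hanti
    (Fintype.card {r : P // r ≠ q₀} - S.card) S f
    (by have := Finset.card_le_univ S; omega)
    hfS hlowS hhighS
  -- the facet function φ
  set π : P → {r : P // r ≠ q₀} :=
    fun r => if h : r = q₀ then ⟨p₀, hpq⟩ else ⟨r, h⟩ with hπ
  set φ : P → ℝ := fun r => g (π r) with hφ
  have hπq : π q₀ = ⟨p₀, hpq⟩ := by simp [hπ]
  have hπo : ∀ (r : P) (h : r ≠ q₀), π r = ⟨r, h⟩ := by
    intro r h; simp [hπ, h]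
  have hφmark : ∀ w ∈ Pstar, φ w = lam w := by
    intro w hw
    by_cases hwq : w = q₀
    · subst hwq
      rw [hφ]
      dsimp only
      rw [hπq, hg1 ⟨p₀, hpq⟩ ((hmemS _).2 (Or.inr ⟨rfl, hw⟩)), hf_special ⟨p₀, hpq⟩ rfl hw]
    · rw [hφ]
      dsimp only
      rw [hπo w hwq, hg1 ⟨w, hwq⟩ ((hmemS _).2 (Or.inl hw)), hf_marked ⟨w, hwq⟩ hw]
  have hφeq : φ p₀ = φ q₀ := by
    rw [hφ]
    dsimp only
    rw [hπq, hπo p₀ hpq]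
  have hφstrict : ∀ r s : P, r ⋖ s → ¬(r = p₀ ∧ s = q₀) → φ r < φ s := by
    intro r s hc hne
    rw [hφ]
    dsimp only
    by_cases hsq : s = q₀
    · have hrq : r ≠ q₀ := ne_of_lt (hsq ▸ hc.lt)
      rw [hπo r hrq, hsq, hπq]
      apply hg2
      · exact Or.inr ⟨(hsq ▸ hc.lt).le, le_rfl⟩
      · exact fun hh => hne ⟨congrArg Subtype.val hh, hsq⟩
    · by_cases hrq : r = q₀
      · have hps : p₀ < s := hpltq.trans (hrq ▸ hc.lt)
        rw [hrq, hπq, hπo s hsq]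
        apply hg2
        · exact Or.inl hps.le
        · exact fun hh => (ne_of_lt hps) (congrArg Subtype.val hh)
      · rw [hπo r hrq, hπo s hsq]
        apply hg2
        · exact Or.inl hc.lt.le
        · exact fun hh => hc.lt.ne (congrArg Subtype.val hh)
  have hφcov : ∀ r s : P, r ⋖ s → φ r ≤ φ s := by
    intro r s hc
    by_cases h : r = p₀ ∧ s = q₀
    · rw [h.1, h.2]; exact le_of_eq hφeq
    · exact (hφstrict r s hc h).le
  -- the facet point
  set x0 : {p : P // p ∉ Pstar} → ℝ := fun r => φ r.1 with hx0
  have hx0ext : extFun Pstar lam x0 = φ := by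
    funext w
    unfold extFun
    by_cases h : w ∈ Pstar
    · rw [dif_pos h, hφmark w h]
    · rw [dif_neg h]
  have hx0O : x0 ∈ MOproj Pstar lam := by
    intro p q h
    rw [hx0ext]
    exact mono_of_cov φ hφcov p q h
  -- margin δ
  set C : Finset (P × P) :=
    Finset.univ.filter (fun rs => rs.1 ⋖ rs.2 ∧ ¬(rs.1 = p₀ ∧ rs.2 = q₀)) with hC
  set δ : ℝ :=
    if hCne : C.Nonempty then (C.inf' hCne (fun rs => φ rs.2 - φ rs.1)) / 2 else 1 with hδ
  have hδpos : 0 < δ := by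
    rw [hδ]
    split_ifs with hCne
    · apply div_pos _ two_pos
      rw [Finset.lt_inf'_iff]
      rintro ⟨r, s⟩ hrs
      obtain ⟨_, hcrs, hners⟩ := Finset.mem_filter.1 hrs
      exact sub_pos.2 (hφstrict r s hcrs hners)
    · exact one_pos
  have hδle : ∀ r s : P, r ⋖ s → ¬(r = p₀ ∧ s = q₀) → φ r + δ ≤ φ s := by
    intro r s hc hne
    have hmem : (r, s) ∈ C := Finset.mem_filter.2 ⟨Finset.mem_univ _, hc, hne⟩
    have hCne : C.Nonempty := ⟨_, hmem⟩
    rw [hδ, dif_pos hCne]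
    have h1 : C.inf' hCne (fun rs => φ rs.2 - φ rs.1) ≤ φ s - φ r :=
      Finset.inf'_le _ hmem
    have h2 : 0 < φ s - φ r := sub_pos.2 (hφstrict r s hc hne)
    linarith
  -- the base facet point pairing value
  have hsum_base : (∑ r, α r * (x0 r - u r)) = 1 := by
    rw [pairSum, hx0ext, hφeq, sub_self, zero_add, div_self hd0.ne']
  -- single coordinate variants
  have hupdO : ∀ r₀ : {p : P // p ∉ Pstar}, r₀.1 ≠ p₀ → r₀.1 ≠ q₀ →
      Function.update x0 r₀ (x0 r₀ + δ) ∈ MOproj Pstar lam := by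
    intro r₀ h1 h2
    set ψ1 : P → ℝ := fun w => if w = r₀.1 then φ w + δ else φ w with hψ1
    have hexteq : extFun Pstar lam (Function.update x0 r₀ (x0 r₀ + δ)) = ψ1 := by
      funext w
      unfold extFun
      rw [hψ1]
      dsimp only
      by_cases h : w ∈ Pstar
      · rw [dif_pos h, if_neg (fun hh : w = r₀.1 => r₀.2 (hh ▸ h))]
        exact (hφmark w h).symm
      · rw [dif_neg h]
        by_cases hw : w = r₀.1
        · have hww : (⟨w, h⟩ : {p : P // p ∉ Pstar}) = r₀ := Subtype.ext hw
          rw [hww, Function.update_self, if_pos hw, hx0]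
          dsimp only
          rw [hw]
        · rw [Function.update_of_ne (fun hh => hw (congrArg Subtype.val hh)), if_neg hw, hx0]
    have hψ1cov : ∀ r s : P, r ⋖ s → ψ1 r ≤ ψ1 s := by
      intro r s hc
      rw [hψ1]
      dsimp only
      by_cases hr : r = r₀.1
      · have hs : ¬ s = r₀.1 := fun hh => hc.lt.ne (hr.trans hh.symm)
        rw [if_pos hr, if_neg hs]
        exact hδle r s hc (fun hh => h1 (hr.symm.trans hh.1))
      · by_cases hs : s = r₀.1
        · rw [if_neg hr, if_pos hs]
          have := hφcov r s hc
          linarith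
        · rw [if_neg hr, if_neg hs]
          exact hφcov r s hc
    intro p q h
    rw [hexteq]
    exact mono_of_cov ψ1 hψ1cov p q h
  have hsum_upd : ∀ (r₀ : {p : P // p ∉ Pstar}) (h1 : r₀.1 ≠ p₀) (h2 : r₀.1 ≠ q₀),
      (∑ r, α r * (Function.update x0 r₀ (x0 r₀ + δ) r - u r)) = 1 := by
    intro r₀ h1 h2
    rw [pairSum, extupd x0 r₀ _ p₀ (fun hh => h1 hh.symm),
      extupd x0 r₀ _ q₀ (fun hh => h2 hh.symm), hx0ext, hφeq, sub_self, zero_add,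
      div_self hd0.ne']
  -- the two-coordinate variant
  set x2 : {p : P // p ∉ Pstar} → ℝ :=
    fun r => x0 r + (if (p₀ ∉ Pstar ∧ q₀ ∉ Pstar) ∧ (r.1 = p₀ ∨ r.1 = q₀) then δ else 0)
    with hx2
  set ψ2 : P → ℝ :=
    fun w => φ w + (if (p₀ ∉ Pstar ∧ q₀ ∉ Pstar) ∧ (w = p₀ ∨ w = q₀) then δ else 0)
    with hψ2
  have hx2ext : extFun Pstar lam x2 = ψ2 := by
    funext w
    unfold extFun
    rw [hψ2]
    dsimp only
    by_cases h : w ∈ Pstar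
    · have hcond : ¬((p₀ ∉ Pstar ∧ q₀ ∉ Pstar) ∧ (w = p₀ ∨ w = q₀)) := by
        rintro ⟨⟨hfp, hfq⟩, (hw | hw)⟩
        · exact hfp (hw ▸ h)
        · exact hfq (hw ▸ h)
      rw [dif_pos h, if_neg hcond, hφmark w h]
      exact (add_zero _).symm
    · rw [dif_neg h, hx2]
  have hψ2cov : ∀ r s : P, r ⋖ s → ψ2 r ≤ ψ2 s := by
    intro r s hc
    rw [hψ2]
    dsimp only
    by_cases hbf : p₀ ∉ Pstar ∧ q₀ ∉ Pstar
    · by_cases hpair : r = p₀ ∧ s = q₀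
      · rw [if_pos ⟨hbf, Or.inl hpair.1⟩, if_pos ⟨hbf, Or.inr hpair.2⟩, hpair.1, hpair.2, hφeq]
      · by_cases hr : r = p₀ ∨ r = q₀
        · have hsn : ¬(s = p₀ ∨ s = q₀) := by
            rintro (hs1 | hs2)
            · rcases hr with hr1 | hr2
              · have hlt := hc.lt
                rw [hr1, hs1] at hlt
                exact lt_irrefl _ hlt
              · have hlt := hc.lt
                rw [hr2, hs1] at hlt
                exact lt_asymm hpltq hlt
            · rcases hr with hr1 | hr2
              · exact hpair ⟨hr1, hs2⟩
              · have hlt := hc.lt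
                rw [hr2, hs2] at hlt
                exact lt_irrefl _ hlt
          rw [if_pos ⟨hbf, hr⟩, if_neg (fun hh => hsn hh.2)]
          have := hδle r s hc hpair
          linarith
        · rw [if_neg (fun hh => hr hh.2)]
          by_cases hs : s = p₀ ∨ s = q₀
          · rw [if_pos ⟨hbf, hs⟩]
            have := hφcov r s hc
            linarith [hδpos.le]
          · rw [if_neg (fun hh => hs hh.2)]
            have := hφcov r s hc
            linarith
    · rw [if_neg (fun hh => hbf hh.1), if_neg (fun hh => hbf hh.1)]
      have := hφcov r s hc
      linarith
  have hx2O : x2 ∈ MOproj Pstar lam := by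
    intro p q h
    rw [hx2ext]
    exact mono_of_cov ψ2 hψ2cov p q h
  have hsum_x2 : (∑ r, α r * (x2 r - u r)) = 1 := by
    rw [pairSum, hx2ext, hψ2]
    dsimp only
    by_cases hbf : p₀ ∉ Pstar ∧ q₀ ∉ Pstar
    · have hc1 : (p₀ ∉ Pstar ∧ q₀ ∉ Pstar) ∧ (p₀ = p₀ ∨ p₀ = q₀) := ⟨hbf, Or.inl rfl⟩
      have hc2 : (p₀ ∉ Pstar ∧ q₀ ∉ Pstar) ∧ (q₀ = p₀ ∨ q₀ = q₀) := ⟨hbf, Or.inr rfl⟩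
      rw [if_pos hc1, if_pos hc2, hφeq]
      have he : φ q₀ + δ - (φ q₀ + δ) + d = d := by ring
      rw [he, div_self hd0.ne']
    · rw [if_neg (fun hh => hbf hh.1), if_neg (fun hh => hbf hh.1), hφeq]
      have he : φ q₀ + 0 - (φ q₀ + 0) + d = d := by ring
      rw [he, div_self hd0.ne']
  -- α-value computations
  have hα0 : ∀ r : {p : P // p ∉ Pstar}, r.1 ≠ p₀ → r.1 ≠ q₀ → α r = 0 := by
    intro r h1 h2
    simp only [hα]
    rw [if_neg h1, if_neg h2]
    ring
  have hαP : ∀ h : p₀ ∉ Pstar, α ⟨p₀, h⟩ = 1 / d := by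
    intro h
    simp only [hα]
    rw [if_pos trivial, if_neg hpq]
    ring
  have hαQ : ∀ h : q₀ ∉ Pstar, α ⟨q₀, h⟩ = -(1 / d) := by
    intro h
    simp only [hα]
    rw [if_neg (fun hh : q₀ = p₀ => hpq hh.symm), if_pos trivial]
    ring
  -- the key rigidity: anything pairing to 1 on all facet variants equals α
  have hkey : ∀ β' : {p : P // p ∉ Pstar} → ℝ,
      (∀ x ∈ MOproj Pstar lam, (∑ r, α r * (x r - u r)) = 1 →
        (∑ r, β' r * (x r - u r)) = 1) → β' = α := by
    intro β' hβ'
    have e0 : (∑ r, β' r * (x0 r - u r)) = 1 := hβ' x0 hx0O hsum_base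
    have e1 : ∀ r₀ : {p : P // p ∉ Pstar}, r₀.1 ≠ p₀ → r₀.1 ≠ q₀ → β' r₀ = 0 := by
      intro r₀ h1 h2
      have e := hβ' _ (hupdO r₀ h1 h2) (hsum_upd r₀ h1 h2)
      have expand : ∀ r : {p : P // p ∉ Pstar},
          Function.update x0 r₀ (x0 r₀ + δ) r - u r
            = (x0 r - u r) + (if r = r₀ then δ else 0) := by
        intro r
        by_cases hr : r = r₀
        · subst hr
          rw [Function.update_self, if_pos rfl]
          ring
        · rw [Function.update_of_ne hr, if_neg hr]
          ring
      rw [Finset.sum_congr rfl (fun r _ => by rw [expand r, mul_add]),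
        Finset.sum_add_distrib, e0] at e
      have hsingle : (∑ r, β' r * (if r = r₀ then δ else 0)) = β' r₀ * δ := by
        rw [Finset.sum_eq_single r₀]
        · rw [if_pos rfl]
        · intro r _ hr
          rw [if_neg hr, mul_zero]
        · intro h
          exact absurd (Finset.mem_univ _) h
      rw [hsingle] at e
      have hz : β' r₀ * δ = 0 := by linarith
      rcases mul_eq_zero.1 hz with h | h
      · exact h
      · exact absurd h hδpos.ne'
    -- support reduction of the base identity
    have ediff : (∑ r, (β' r - α r) * (x0 r - u r)) = 0 := by
      have : (∑ r, (β' r - α r) * (x0 r - u r))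
          = (∑ r, β' r * (x0 r - u r)) - (∑ r, α r * (x0 r - u r)) := by
        rw [← Finset.sum_sub_distrib]
        apply Finset.sum_congr rfl
        intro r _
        ring
      rw [this, e0, hsum_base]
      ring
    have esupp : (∑ r, (β' r - α r) * (x0 r - u r))
        = (if h : p₀ ∈ Pstar then 0 else (β' ⟨p₀, h⟩ - α ⟨p₀, h⟩) * (x0 ⟨p₀, h⟩ - u ⟨p₀, h⟩))
          + (if h : q₀ ∈ Pstar then 0 else (β' ⟨q₀, h⟩ - α ⟨q₀, h⟩) * (x0 ⟨q₀, h⟩ - u ⟨q₀, h⟩)) := by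
      rw [← coordSum p₀ (fun r => (β' r - α r) * (x0 r - u r)),
        ← coordSum q₀ (fun r => (β' r - α r) * (x0 r - u r)),
        ← Finset.sum_add_distrib]
      apply Finset.sum_congr rfl
      intro r _
      by_cases h1 : r.1 = p₀
      · rw [if_pos h1, if_neg (fun hh => hpq (h1.symm.trans hh))]
        ring
      · by_cases h2 : r.1 = q₀
        · rw [if_neg h1, if_pos h2]
          ring
        · rw [if_neg h1, if_neg h2, e1 r h1 h2, hα0 r h1 h2]
          ring
    rw [esupp] at ediff
    -- coordinate values of the base point
    have hvalP : ∀ h : p₀ ∉ Pstar, x0 ⟨p₀, h⟩ - u ⟨p₀, h⟩ = φ p₀ - v p₀ := by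
      intro h
      rw [hx0, ← hvfree p₀ h]
    have hvalQ : ∀ h : q₀ ∉ Pstar, x0 ⟨q₀, h⟩ - u ⟨q₀, h⟩ = φ q₀ - v q₀ := by
      intro h
      rw [hx0, ← hvfree q₀ h]
    by_cases hp : p₀ ∈ Pstar
    · have hq : q₀ ∉ Pstar := hfree.resolve_left (fun hnp => hnp hp)
      rw [dif_pos hp, dif_neg hq, hvalQ hq] at ediff
      have hval : φ q₀ - v q₀ = -d := by
        rw [← hφeq, hφmark p₀ hp, ← hvmark p₀ hp, hd_def]
        ring
      rw [hval] at ediff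
      have hQ0 : β' ⟨q₀, hq⟩ = α ⟨q₀, hq⟩ := by
        have := mul_eq_zero.1 (by linarith : (β' ⟨q₀, hq⟩ - α ⟨q₀, hq⟩) * (-d) = 0)
        rcases this with h | h
        · linarith [h]
        · exact absurd h (by linarith)
      funext r
      by_cases h2 : r.1 = q₀
      · have : r = ⟨q₀, hq⟩ := Subtype.ext h2
        rw [this]
        exact hQ0
      · by_cases h1 : r.1 = p₀
        · exact absurd hp (h1 ▸ r.2)
        · rw [e1 r h1 h2, hα0 r h1 h2]
    · by_cases hq : q₀ ∈ Pstar
      · rw [dif_neg hp, dif_pos hq, hvalP hp] at ediff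
        have hval : φ p₀ - v p₀ = d := by
          rw [hφeq, hφmark q₀ hq, ← hvmark q₀ hq, hd_def]
        rw [hval] at ediff
        have hP0 : β' ⟨p₀, hp⟩ = α ⟨p₀, hp⟩ := by
          have := mul_eq_zero.1 (by linarith : (β' ⟨p₀, hp⟩ - α ⟨p₀, hp⟩) * d = 0)
          rcases this with h | h
          · linarith [h]
          · exact absurd h hd0.ne'
        funext r
        by_cases h1 : r.1 = p₀
        · have : r = ⟨p₀, hp⟩ := Subtype.ext h1
          rw [this]
          exact hP0
        · by_cases h2 : r.1 = q₀
          · exact absurd hq (h2 ▸ r.2)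
          · rw [e1 r h1 h2, hα0 r h1 h2]
      · -- both free: use the two-coordinate variant
        have e2 : β' ⟨p₀, hp⟩ + β' ⟨q₀, hq⟩ = 0 := by
          have e := hβ' x2 hx2O hsum_x2
          have expand : ∀ r : {p : P // p ∉ Pstar},
              x2 r - u r = (x0 r - u r)
                + ((if r.1 = p₀ then δ else 0) + (if r.1 = q₀ then δ else 0)) := by
            intro r
            rw [hx2]
            dsimp only
            by_cases h1 : r.1 = p₀
            · rw [if_pos ⟨⟨hp, hq⟩, Or.inl h1⟩, if_pos h1,
                if_neg (fun hh => hpq (h1.symm.trans hh))]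
              ring
            · by_cases h2 : r.1 = q₀
              · rw [if_pos ⟨⟨hp, hq⟩, Or.inr h2⟩, if_neg h1, if_pos h2]
                ring
              · rw [if_neg (fun hh => (hh.2).elim h1 h2), if_neg h1, if_neg h2]
                ring
          rw [Finset.sum_congr rfl (fun r _ => by rw [expand r, mul_add, mul_add]),
            Finset.sum_add_distrib, Finset.sum_add_distrib, e0] at e
          have hs1 : (∑ r, β' r * (if r.1 = p₀ then δ else 0)) = β' ⟨p₀, hp⟩ * δ := by
            have : ∀ r : {p : P // p ∉ Pstar},
                β' r * (if r.1 = p₀ then δ else 0) = (if r.1 = p₀ then β' r * δ else 0) := by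
              intro r
              by_cases h1 : r.1 = p₀
              · rw [if_pos h1, if_pos h1]
              · rw [if_neg h1, if_neg h1, mul_zero]
            rw [Finset.sum_congr rfl (fun r _ => this r), coordSum p₀ (fun r => β' r * δ),
              dif_neg hp]
          have hs2 : (∑ r, β' r * (if r.1 = q₀ then δ else 0)) = β' ⟨q₀, hq⟩ * δ := by
            have : ∀ r : {p : P // p ∉ Pstar},
                β' r * (if r.1 = q₀ then δ else 0) = (if r.1 = q₀ then β' r * δ else 0) := by
              intro r
              by_cases h2 : r.1 = q₀
              · rw [if_pos h2, if_pos h2]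
              · rw [if_neg h2, if_neg h2, mul_zero]
            rw [Finset.sum_congr rfl (fun r _ => this r), coordSum q₀ (fun r => β' r * δ),
              dif_neg hq]
          rw [hs1, hs2] at e
          have hz : (β' ⟨p₀, hp⟩ + β' ⟨q₀, hq⟩) * δ = 0 := by linarith
          rcases mul_eq_zero.1 hz with h | h
          · exact h
          · exact absurd h hδpos.ne'
        have eα2 : α ⟨p₀, hp⟩ + α ⟨q₀, hq⟩ = 0 := by
          rw [hαP hp, hαQ hq]
          ring
        rw [dif_neg hp, dif_neg hq, hvalP hp, hvalQ hq] at ediff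
        -- (β'P - αP)(φp₀ - vp₀) + (β'Q - αQ)(φq₀ - vq₀) = 0 with β'Q - αQ = -(β'P - αP)
        have hsub : β' ⟨q₀, hq⟩ - α ⟨q₀, hq⟩ = -(β' ⟨p₀, hp⟩ - α ⟨p₀, hp⟩) := by
          linarith
        rw [hsub] at ediff
        have hdd : (φ p₀ - v p₀) - (φ q₀ - v q₀) = d := by
          rw [hφeq, hd_def]
          ring
        have hP0 : β' ⟨p₀, hp⟩ = α ⟨p₀, hp⟩ := by
          have hz : (β' ⟨p₀, hp⟩ - α ⟨p₀, hp⟩) * d = 0 := by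
            have : (β' ⟨p₀, hp⟩ - α ⟨p₀, hp⟩) * ((φ p₀ - v p₀) - (φ q₀ - v q₀)) = 0 := by
              linarith [ediff]
            rw [hdd] at this
            exact this
          rcases mul_eq_zero.1 hz with h | h
          · linarith
          · exact absurd h hd0.ne'
        have hQ0 : β' ⟨q₀, hq⟩ = α ⟨q₀, hq⟩ := by linarith
        funext r
        by_cases h1 : r.1 = p₀
        · have : r = ⟨p₀, hp⟩ := Subtype.ext h1
          rw [this]
          exact hP0
        · by_cases h2 : r.1 = q₀
          · have : r = ⟨q₀, hq⟩ := Subtype.ext h2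
            rw [this]
            exact hQ0
          · rw [e1 r h1 h2, hα0 r h1 h2]
  -- α is an extreme point of the dual
  have hext : α ∈ (polarDual ((fun x => x - u) '' MOproj Pstar lam)).extremePoints ℝ := by
    rw [mem_extremePoints]
    refine ⟨hαdual, ?_⟩
    intro β hβ γ hγ hseg
    obtain ⟨s, t, hs, ht, hst, hcomb⟩ := hseg
    have pinch : ∀ x ∈ MOproj Pstar lam, (∑ r, α r * (x r - u r)) = 1 →
        (∑ r, β r * (x r - u r)) = 1 ∧ (∑ r, γ r * (x r - u r)) = 1 := by
      intro x hx h1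
      have hbx : (∑ r, β r * (x r - u r)) ≤ 1 := hβ (x - u) ⟨x, hx, rfl⟩
      have hgx : (∑ r, γ r * (x r - u r)) ≤ 1 := hγ (x - u) ⟨x, hx, rfl⟩
      have hsum : s * (∑ r, β r * (x r - u r)) + t * (∑ r, γ r * (x r - u r)) = 1 := by
        rw [Finset.mul_sum, Finset.mul_sum, ← Finset.sum_add_distrib, ← h1]
        apply Finset.sum_congr rfl
        intro r _
        have hc : s * β r + t * γ r = α r := by
          have := congrFun hcomb r
          simpa using this
        rw [← hc]
        ring
      constructor
      · by_contra hne
        have hBlt : (∑ r, β r * (x r - u r)) < 1 := lt_of_le_of_ne hbx hne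
        have k1 : s * (∑ r, β r * (x r - u r)) < s * 1 := mul_lt_mul_of_pos_left hBlt hs
        have k2 : t * (∑ r, γ r * (x r - u r)) ≤ t * 1 := mul_le_mul_of_nonneg_left hgx ht.le
        linarith
      · by_contra hne
        have hGlt : (∑ r, γ r * (x r - u r)) < 1 := lt_of_le_of_ne hgx hne
        have k1 : t * (∑ r, γ r * (x r - u r)) < t * 1 := mul_lt_mul_of_pos_left hGlt ht
        have k2 : s * (∑ r, β r * (x r - u r)) ≤ s * 1 := mul_le_mul_of_nonneg_left hbx hs.le
        linarith
    constructor
    · exact hkey β (fun x hx h1 => (pinch x hx h1).1)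
    · exact hkey γ (fun x hx h1 => (pinch x hx h1).2)
  -- conclude
  rw [hAdual] at hext
  have hαA : α ∈ A := extremePoints_convexHull_subset hext
  have hαlat : IsLat α := hAlat α hαA
  rcases hfree with hp | hq
  · obtain ⟨n, hn⟩ := hαlat ⟨p₀, hp⟩
    rw [hαP hp] at hn
    have h1 : (0:ℝ) < 1 / d := by positivity
    have h2 : 1 / d < 1 := by
      rw [div_lt_one hd0]
      linarith
    rw [hn] at h1 h2
    have k1 : (0:ℤ) < n := by exact_mod_cast h1
    have k2 : n < 1 := by exact_mod_cast h2
    omega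
  · obtain ⟨n, hn⟩ := hαlat ⟨q₀, hq⟩
    rw [hαQ hq] at hn
    have h1 : -(1 / d) < 0 := by
      have : (0:ℝ) < 1 / d := by positivity
      linarith
    have h2 : (-1:ℝ) < -(1 / d) := by
      have : 1 / d < 1 := by
        rw [div_lt_one hd0]
        linarith
      linarith
    rw [hn] at h1 h2
    have k1 : n < 0 := by exact_mod_cast h1
    have k2 : (-1:ℤ) < n := by exact_mod_cast h2
    omega
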